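/- Let V be a nontrivial finite-dimensional real inner product space, G a group, and ρ a homomorphism from G into the group of linear isometric automorphisms of V (an orthogonal representation). Suppose that every orthogonal linear map A : V → V which commutes with ρ(g) for all g ∈ G satisfies A = id or A = -id. Then the representation is absolutely irreducible: every ℝ-linear map B : V → V that commutes with ρ(g) for all g ∈ G is a real scalar multiple of the identity. -/

import Mathlib

open Module

private lemma scalar_of_symm_commute
    {V : Type*} [NormedAddCommGroup V] [InnerProductSpace ℝ V]
    [FiniteDimensional ℝ V] [Nontrivial V]
    {G : Type*} [Group G] (ρ : G →* (V ≃ₗᵢ[ℝ] V))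
    (h : ∀ A : V ≃ₗᵢ[ℝ] V, (∀ (g : G) (v : V), A (ρ g v) = ρ g (A v)) →
      (∀ v, A v = v) ∨ (∀ v, A v = -v))
    (S : V →ₗ[ℝ] V) (hS : S.IsSymmetric)
    (hc : ∀ (g : G) (v : V), S (ρ g v) = ρ g (S v)) :
    ∃ μ : ℝ, ∀ v, S v = μ • v := by
  have hinv' : ∀ (g : G) (v : V), ρ g (ρ g⁻¹ v) = v := by
    intro g v
    have h1 : ρ g * ρ g⁻¹ = 1 := by rw [← map_mul, mul_inv_cancel, map_one]
    have h2 := DFunLike.congr_fun h1 v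
    simpa [LinearIsometryEquiv.coe_mul, LinearIsometryEquiv.coe_one] using h2
  obtain ⟨μ, hμ⟩ : ∃ μ : ℝ, Module.End.HasEigenvalue S μ :=
    ⟨_, hS.hasEigenvalue_iSup_of_finiteDimensional⟩
  set K : Submodule ℝ V := Module.End.eigenspace S μ with hK
  have hmem : ∀ v : V, v ∈ K ↔ S v = μ • v := fun v => Module.End.mem_eigenspace_iff
  have hmap : ∀ g : G, K.map ((ρ g).toLinearEquiv : V →ₗ[ℝ] V) = K := by
    intro g
    apply le_antisymm
    · rintro _ ⟨v, hv, rfl⟩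
      have hv' : S v = μ • v := (hmem v).mp hv
      refine (hmem _).mpr ?_
      show S (ρ g v) = μ • (ρ g v)
      rw [hc, hv', map_smul]
    · intro v hv
      have hv' : S v = μ • v := (hmem v).mp hv
      refine ⟨ρ g⁻¹ v, (hmem _).mpr ?_, hinv' g v⟩
      show S (ρ g⁻¹ v) = μ • (ρ g⁻¹ v)
      have h3 : S (ρ g (ρ g⁻¹ v)) = ρ g (S (ρ g⁻¹ v)) := hc g _
      rw [hinv', hv'] at h3
      apply (ρ g).injective
      rw [← h3, map_smul, hinv']
  have hcomm : ∀ (g : G) (v : V), K.reflection (ρ g v) = ρ g (K.reflection v) := by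
    intro g v
    conv_lhs => rw [← hmap g]
    rw [Submodule.reflection_map_apply]
    congr 2
    exact (ρ g).symm_apply_apply v
  rcases h K.reflection hcomm with h1 | h1
  · exact ⟨μ, fun v => (hmem v).mp ((Submodule.reflection_eq_self_iff v).mp (h1 v))⟩
  · exfalso
    apply hμ
    rw [Submodule.eq_bot_iff]
    intro v hv
    have h2 := h1 v
    rw [Submodule.reflection_mem_subspace_eq_self hv] at h2
    have h3 : v + v = 0 := by nth_rewrite 1 [h2]; exact neg_add_cancel v
    have h4 : (2 : ℝ) • v = 0 := by rw [two_smul]; exact h3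
    simpa using (smul_eq_zero.mp h4).resolve_left (by norm_num)

/-- **Criterion for absolute irreducibility.**
Let `ρ` be an orthogonal representation of a group `G` on a nontrivial
finite-dimensional real inner product space `V`. If every orthogonal map
commuting with the representation is `±id`, then every linear map commuting
with the representation is a real scalar multiple of the identity, i.e. the
representation is absolutely irreducible. -/
theorem absolutely_irreducible_of_orthogonal_commutant
    {V : Type*} [NormedAddCommGroup V] [InnerProductSpace ℝ V]
    [FiniteDimensional ℝ V] [Nontrivial V]
    {G : Type*} [Group G] (ρ : G →* (V ≃ₗᵢ[ℝ] V))
    (h : ∀ A : V ≃ₗᵢ[ℝ] V, (∀ (g : G) (v : V), A (ρ g v) = ρ g (A v)) →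
      (∀ v, A v = v) ∨ (∀ v, A v = -v)) :
    ∀ B : V →ₗ[ℝ] V, (∀ (g : G) (v : V), B (ρ g v) = ρ g (B v)) →
      ∃ c : ℝ, B = c • LinearMap.id := by
  intro B hB
  have hinv' : ∀ (g : G) (v : V), ρ g (ρ g⁻¹ v) = v := by
    intro g v
    have h1 : ρ g * ρ g⁻¹ = 1 := by rw [← map_mul, mul_inv_cancel, map_one]
    have h2 := DFunLike.congr_fun h1 v
    simpa [LinearIsometryEquiv.coe_mul, LinearIsometryEquiv.coe_one] using h2
  set Bd := LinearMap.adjoint B with hBd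
  have hBd_comm : ∀ (g : G) (v : V), Bd (ρ g v) = ρ g (Bd v) := by
    intro g v
    apply ext_inner_right ℝ
    intro w
    calc inner ℝ (Bd (ρ g v)) w = inner ℝ (ρ g v) (B w) := LinearMap.adjoint_inner_left B _ _
      _ = inner ℝ (ρ g v) (ρ g (ρ g⁻¹ (B w))) := by rw [hinv' g (B w)]
      _ = inner ℝ v (ρ g⁻¹ (B w)) := (ρ g).inner_map_map _ _
      _ = inner ℝ v (B (ρ g⁻¹ w)) := by rw [hB]
      _ = inner ℝ (Bd v) (ρ g⁻¹ w) := (LinearMap.adjoint_inner_left B _ _).symm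
      _ = inner ℝ (ρ g (Bd v)) (ρ g (ρ g⁻¹ w)) := ((ρ g).inner_map_map _ _).symm
      _ = inner ℝ (ρ g (Bd v)) w := by rw [hinv' g w]
  -- symmetric part is scalar
  have hSsym : (B + Bd).IsSymmetric := by
    intro x y
    simp only [LinearMap.add_apply, inner_add_left, inner_add_right, hBd,
      LinearMap.adjoint_inner_left, LinearMap.adjoint_inner_right]
    ring
  obtain ⟨μ, hμ⟩ := scalar_of_symm_commute ρ h (B + Bd) hSsym
    (fun g v => by simp only [LinearMap.add_apply, hB, hBd_comm, map_add])
  -- skew part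
  set T : V →ₗ[ℝ] V := B - Bd with hT
  have hT_comm : ∀ (g : G) (v : V), T (ρ g v) = ρ g (T v) := fun g v => by
    simp only [hT, LinearMap.sub_apply, hB, hBd_comm, map_sub]
  have hTd : LinearMap.adjoint T = -T := by
    rw [hT, map_sub, LinearMap.adjoint_adjoint, ← hBd]
    abel
  have hTTsym : (LinearMap.adjoint T ∘ₗ T).IsSymmetric := by
    intro x y
    rw [LinearMap.comp_apply, LinearMap.comp_apply, LinearMap.adjoint_inner_left,
      LinearMap.adjoint_inner_right]
  obtain ⟨c, hc⟩ := scalar_of_symm_commute ρ h (LinearMap.adjoint T ∘ₗ T) hTTsym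
    (fun g v => by
      rw [LinearMap.comp_apply, LinearMap.comp_apply, hT_comm]
      rw [hTd]; simp only [LinearMap.neg_apply, map_neg, hT_comm])
  have hkey : ∀ v : V, inner ℝ ((LinearMap.adjoint T ∘ₗ T) v) v = (‖T v‖ : ℝ) ^ 2 := by
    intro v
    rw [LinearMap.comp_apply, LinearMap.adjoint_inner_left, real_inner_self_eq_norm_sq]
  have hcnn : 0 ≤ c := by
    obtain ⟨v, hv⟩ := exists_ne (0 : V)
    have h1 := hkey v
    rw [hc, real_inner_smul_left, real_inner_self_eq_norm_sq] at h1
    have hv2 : 0 < ‖v‖ ^ 2 := pow_pos (norm_pos_iff.mpr hv) 2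
    nlinarith [sq_nonneg ‖T v‖]
  rcases eq_or_lt_of_le hcnn with hc0 | hcpos
  · -- T = 0, so 2B = μ • id
    have hT0 : ∀ v, T v = 0 := by
      intro v
      have h1 := hkey v
      rw [hc, ← hc0, zero_smul, inner_zero_left] at h1
      exact norm_eq_zero.mp (sq_eq_zero_iff.mp h1.symm)
    refine ⟨μ / 2, ?_⟩
    ext v
    have h1 : B v - Bd v = 0 := by
      have := hT0 v; simpa [hT] using this
    have h2 : B v + Bd v = μ • v := hμ v
    have h3 : B v + B v = μ • v := by
      have hBBd : B v = Bd v := by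
        have := sub_eq_zero.mp h1; exact this
      rw [← h2]; rw [hBBd]
    simp only [LinearMap.smul_apply, LinearMap.id_apply]
    have h4 : (2 : ℝ) • B v = μ • v := by rw [two_smul]; exact h3
    have h5 : B v = ((2:ℝ)⁻¹ * μ) • v := by
      rw [mul_smul, ← h4, ← mul_smul]; norm_num
    rw [h5, div_eq_inv_mul]
  · exfalso
    set r := Real.sqrt c with hr
    have hrpos : 0 < r := Real.sqrt_pos.mpr hcpos
    have hr2 : r * r = c := Real.mul_self_sqrt hcnn
    set U : V →ₗ[ℝ] V := r⁻¹ • T with hU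
    have hadjTT : ∀ v : V, LinearMap.adjoint T (T v) = c • v := fun v => hc v
    have hTT : ∀ v : V, T (T v) = -(c • v) := by
      intro v
      have h1 := hadjTT v
      rw [hTd] at h1
      simp only [LinearMap.neg_apply] at h1
      rw [← h1, neg_neg]
    have hUsq : ∀ v : V, U (U v) = -v := by
      intro v
      simp only [hU, LinearMap.smul_apply, map_smul]
      rw [hTT, smul_neg, smul_neg, ← mul_smul, ← mul_smul]
      rw [show r⁻¹ * r⁻¹ * c = (r * r)⁻¹ * c by ring, hr2,
        inv_mul_cancel₀ (ne_of_gt hcpos), one_smul]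
    have hUinner : ∀ x y : V, inner ℝ (U x) (U y) = (inner ℝ x y : ℝ) := by
      intro x y
      have hTinner : inner ℝ (T x) (T y) = c * (inner ℝ x y : ℝ) := by
        rw [← LinearMap.adjoint_inner_left, hadjTT, real_inner_smul_left]
      simp only [hU, LinearMap.smul_apply, real_inner_smul_left, real_inner_smul_right]
      rw [hTinner]
      rw [show r⁻¹ * (r⁻¹ * (c * inner ℝ x y)) = ((r * r)⁻¹ * c) * inner ℝ x y by ring, hr2,
        inv_mul_cancel₀ (ne_of_gt hcpos), one_mul]
    have hUleft : (-U) ∘ₗ U = LinearMap.id := by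
      ext v
      simp only [LinearMap.comp_apply, LinearMap.neg_apply, LinearMap.id_apply, hUsq, neg_neg]
    have hUright : U ∘ₗ (-U) = LinearMap.id := by
      ext v
      simp only [LinearMap.comp_apply, LinearMap.neg_apply, LinearMap.id_apply, map_neg,
        hUsq, neg_neg]
    set e : V ≃ₗ[ℝ] V := LinearEquiv.ofLinear U (-U) hUright hUleft with he
    set A : V ≃ₗᵢ[ℝ] V := e.isometryOfInner (fun x y => hUinner x y) with hA
    have hAapp : ∀ v, A v = U v := by
      intro v
      rw [hA]; rfl
    have hAcomm : ∀ (g : G) (v : V), A (ρ g v) = ρ g (A v) := by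
      intro g v
      rw [hAapp, hAapp, hU]
      simp only [LinearMap.smul_apply, hT_comm, map_smul]
    have key : ∀ v : V, U (U v) = v → v = 0 := by
      intro v hv2
      have h2 : -v = v := (hUsq v).symm.trans hv2
      have h3 : v + v = 0 := by nth_rewrite 1 [← h2]; exact neg_add_cancel v
      have h4 : (2 : ℝ) • v = 0 := by rw [two_smul]; exact h3
      simpa using (smul_eq_zero.mp h4).resolve_left (by norm_num)
    obtain ⟨v, hv⟩ := exists_ne (0 : V)
    rcases h A hAcomm with h1 | h1
    · exact hv (key v (by rw [← hAapp, ← hAapp, h1, h1]))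
    · refine hv (key v ?_)
      rw [← hAapp, ← hAapp, h1, h1, neg_neg]
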